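/- If Σ is a consistent set of equations admitting a Mal'cev term m (Σ ⊢ m(x,y,y) ≈ x and Σ ⊢ m(x,x,y) ≈ y, and V(Σ) contains an algebra with two or more elements), then the free-algebra functor F_Σ does not preserve preimages, i.e. Σ ⊬ Σ'. -/
import Mathlib


universe u

/-- A finitary algebraic signature. -/
structure Sig where
  ops : Type
  ar : ops → ℕ

namespace UA

/-- Terms over the signature `S` with variables from `X`. -/
inductive Term (S : Sig) (X : Type) : Type where
  | var : X → Term S X
  | app : (o : S.ops) → (Fin (S.ar o) → Term S X) → Term S X

/-- Simultaneous substitution of terms for variables. -/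
def Term.subst {S : Sig} {X Y : Type} (σ : X → Term S Y) : Term S X → Term S Y
  | .var x => σ x
  | .app o ts => .app o fun i => (ts i).subst σ

/-- Renaming (substitution of variables for variables). -/
def Term.rename {S : Sig} {X Y : Type} (φ : X → Y) (t : Term S X) : Term S Y :=
  t.subst fun x => .var (φ x)

/-- Equational provability from the set `Γ` of axioms (pairs of terms over the
countable variable set `ℕ`), over arbitrary variable sets. -/
inductive Eqv {S : Sig} (Γ : Set (Term S ℕ × Term S ℕ)) :
    {X : Type} → Term S X → Term S X → Prop where
  | axm {X : Type} {l r : Term S ℕ} (h : (l, r) ∈ Γ) (σ : ℕ → Term S X) :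
      Eqv Γ (l.subst σ) (r.subst σ)
  | refl {X : Type} (t : Term S X) : Eqv Γ t t
  | symm {X : Type} {t u : Term S X} : Eqv Γ t u → Eqv Γ u t
  | trans {X : Type} {t u v : Term S X} : Eqv Γ t u → Eqv Γ u v → Eqv Γ t v
  | congr {X : Type} (o : S.ops) {ts us : Fin (S.ar o) → Term S X} :
      (∀ i, Eqv Γ (ts i) (us i)) → Eqv Γ (.app o ts) (.app o us)
  | sbst {X Y : Type} {t u : Term S X} (σ : X → Term S Y) :
      Eqv Γ t u → Eqv Γ (t.subst σ) (u.subst σ)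

def termSetoid {S : Sig} (Γ : Set (Term S ℕ × Term S ℕ)) (X : Type) : Setoid (Term S X) :=
  ⟨Eqv Γ, ⟨fun t => .refl t, fun h => h.symm, fun h h' => h.trans h'⟩⟩

/-- The free algebra over the variable set `X` in the variety axiomatized by `Γ`:
terms modulo `Γ`-provable equality.  This is the object part of the free-algebra
functor `F_Σ`. -/
def FreeAlg {S : Sig} (Γ : Set (Term S ℕ × Term S ℕ)) (X : Type) : Type :=
  Quotient (termSetoid Γ X)

/-- The action of the free-algebra functor `F_Σ` on maps: variable substitution. -/
def FreeAlg.map {S : Sig} {Γ : Set (Term S ℕ × Term S ℕ)} {X Y : Type} (φ : X → Y) :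
    FreeAlg Γ X → FreeAlg Γ Y :=
  Quotient.map (Term.rename φ) fun _ _ h => h.sbst _

end UA

namespace UA

variable {S : Sig}

/-- Weak independence of the first variable position (see Dent–Kearnes–Szendrei). -/
def WeakIndep (Γ : Set (Term S ℕ × Term S ℕ)) {n : ℕ} (p : Term S (Fin (n + 1))) : Prop :=
  ∃ (x y : ℕ) (v : Fin n → ℕ) (q : Term S Unit),
    x ≠ y ∧ Eqv Γ (p.rename (Fin.cases x v)) (q.rename fun _ => y)

/-- The derivative `Σ'` of `Σ`: all independence equations
`p(x, z₁, …, zₙ) ≈ p(y, z₁, …, zₙ)` (variables distinct) for terms `p` weakly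
independent of the occurrence `x`. -/
def Deriv (Γ : Set (Term S ℕ × Term S ℕ)) : Set (Term S ℕ × Term S ℕ) :=
  { e | ∃ (n : ℕ) (p : Term S (Fin (n + 1))), WeakIndep Γ p ∧
        e = (p.rename (Fin.cases 0 fun i => (i : ℕ) + 2),
             p.rename (Fin.cases 1 fun i => (i : ℕ) + 2)) }

/-- The free-algebra functor preserves preimages. -/
def PreservesPreimages (Γ : Set (Term S ℕ × Term S ℕ)) : Prop :=
  ∀ (X Y : Type) (φ : X → Y) (V : Set Y) (t : FreeAlg Γ X),
    FreeAlg.map φ t ∈ Set.range (FreeAlg.map (Γ := Γ) (Subtype.val : V → Y)) →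
      t ∈ Set.range (FreeAlg.map (Γ := Γ) (Subtype.val : (φ ⁻¹' V) → X))

/-! Auxiliary lemmas -/

theorem Term.subst_subst {X Y Z : Type} (σ : X → Term S Y) (τ : Y → Term S Z)
    (t : Term S X) : (t.subst σ).subst τ = t.subst fun x => (σ x).subst τ := by
  induction t with
  | var x => rfl
  | app o ts ih => simp only [Term.subst]; congr 1; funext i; exact ih i

theorem Term.subst_congr {X Y : Type} {σ σ' : X → Term S Y} (h : ∀ x, σ x = σ' x)
    (t : Term S X) : t.subst σ = t.subst σ' := by
  rw [funext h]

theorem Term.rename_rename {X Y Z : Type} (f : X → Y) (g : Y → Z) (t : Term S X) :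
    (t.rename f).rename g = t.rename (g ∘ f) :=
  Term.subst_subst _ _ t

theorem Term.rename_subst {X Y Z : Type} (f : X → Y) (σ : Y → Term S Z) (t : Term S X) :
    (t.rename f).subst σ = t.subst (σ ∘ f) :=
  Term.subst_subst _ _ t


/-- If `Σ` is consistent and admits a Mal'cev term, then `Σ ⊬ Σ'`, i.e. the
free-algebra functor `F_Σ` does not preserve preimages. -/
theorem malcev_implies_not_preservesPreimages
    (Γ : Set (Term S ℕ × Term S ℕ))
    (hcons : ¬ Eqv Γ (Term.var 0 : Term S ℕ) (Term.var 1))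
    (m : Term S (Fin 3))
    (hm₁ : Eqv Γ (m.rename ![0, 1, 1]) (Term.var 0 : Term S ℕ))
    (hm₂ : Eqv Γ (m.rename ![0, 0, 1]) (Term.var 1 : Term S ℕ)) :
    (¬ ∀ e ∈ Deriv Γ, Eqv Γ e.1 e.2) ∧ ¬ PreservesPreimages Γ := by
  constructor
  · intro hall
    have hwi : WeakIndep Γ (n := 2) m := by
      refine ⟨0, 1, ![0, 1], Term.var (), by norm_num, ?_⟩
      have : (Fin.cases 0 ![0, 1] : Fin 3 → ℕ) = ![0, 0, 1] := by
        funext i; fin_cases i <;> rfl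
      rw [this]; exact hm₂
    have h := hall _ ⟨2, m, hwi, rfl⟩
    simp only at h
    have h' := h.sbst (fun n => Term.var (if n = 0 then 0 else 1))
    rw [Term.rename_subst, Term.rename_subst] at h'
    have e1 : m.subst ((fun n => Term.var (if n = 0 then (0:ℕ) else 1)) ∘
        (Fin.cases 0 fun i : Fin 2 => (i : ℕ) + 2)) = m.rename ![0, 1, 1] :=
      Term.subst_congr (fun x => by fin_cases x <;> rfl) m
    have e2 : m.subst ((fun n => Term.var (if n = 0 then (0:ℕ) else 1)) ∘
        (Fin.cases 1 fun i : Fin 2 => (i : ℕ) + 2)) = m.rename ![1, 1, 1] :=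
      Term.subst_congr (fun x => by fin_cases x <;> rfl) m
    rw [e1, e2] at h'
    -- m(1,1,1) ≈ 1
    have h3 := hm₂.sbst (fun _ => Term.var 1)
    rw [Term.rename_subst] at h3
    have e3 : m.subst ((fun _ => Term.var (1:ℕ)) ∘ ![0, 0, 1]) = m.rename ![1, 1, 1] :=
      Term.subst_congr (fun x => by fin_cases x <;> rfl) m
    rw [e3] at h3
    exact hcons ((hm₁.symm.trans h').trans h3)
  · intro hpp
    classical
    set φ : ℕ → ℕ := fun n => if n = 2 then 1 else 0 with hφ
    set V : Set ℕ := {1} with hV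
    have hmem : FreeAlg.map φ (Quotient.mk (termSetoid Γ ℕ) (m.rename ![0, 1, 2]))
        ∈ Set.range (FreeAlg.map (Γ := Γ) (Subtype.val : V → ℕ)) := by
      refine ⟨Quotient.mk _ (Term.var ⟨1, rfl⟩), ?_⟩
      apply Quotient.sound
      show Eqv Γ ((Term.var (⟨1, rfl⟩ : V)).rename Subtype.val)
        ((m.rename ![0, 1, 2]).rename φ)
      rw [Term.rename_rename]
      have : m.rename (φ ∘ ![0, 1, 2]) = m.rename ![0, 0, 1] := by
        apply Term.subst_congr; intro x; fin_cases x <;> simp [hφ, Term.rename]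
      rw [this]
      exact hm₂.symm.trans (Eqv.refl _)
    obtain ⟨u, hu⟩ := hpp ℕ ℕ φ V _ hmem
    obtain ⟨s, rfl⟩ := u.exists_rep
    have hw : Eqv Γ (s.rename Subtype.val) (m.rename ![0, 1, 2]) := Quotient.exact hu
    -- every variable of s maps to 2
    have hval : ∀ a : (φ ⁻¹' V), (a : ℕ) = 2 := by
      rintro ⟨a, ha⟩
      simp only [hV, hφ, Set.mem_preimage, Set.mem_singleton_iff] at ha
      by_contra hne
      rw [if_neg hne] at ha
      exact zero_ne_one ha
    set τ : ℕ → ℕ := fun n => if n = 1 then 2 else n with hτ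
    have hfix : (s.rename Subtype.val).rename τ = s.rename Subtype.val := by
      rw [Term.rename_rename]
      apply Term.subst_congr
      intro a
      have := hval a
      simp [hτ, this]
    set ρ : ℕ → ℕ := fun n => if n = 1 then 0 else n with hρ
    have hfix2 : (s.rename Subtype.val).rename ρ = s.rename Subtype.val := by
      rw [Term.rename_rename]
      apply Term.subst_congr
      intro a
      have := hval a
      simp [hρ, this]
    -- w ≈ m(0,2,2) ≈ var 0
    have h1 := hw.sbst (fun n => Term.var (τ n))
    have h2 := hw.sbst (fun n => Term.var (ρ n))
    have hr1 : (m.rename ![0, 1, 2]).subst (fun n => Term.var (τ n)) = m.rename ![0, 2, 2] := by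
      rw [Term.rename_subst]
      exact Term.subst_congr (fun x => by fin_cases x <;> simp [hτ]) m
    have hr2 : (m.rename ![0, 1, 2]).subst (fun n => Term.var (ρ n)) = m.rename ![0, 0, 2] := by
      rw [Term.rename_subst]
      exact Term.subst_congr (fun x => by fin_cases x <;> simp [hρ]) m
    have hfix' : (s.rename Subtype.val).subst (fun n => Term.var (τ n)) = s.rename Subtype.val := hfix
    have hfix2' : (s.rename Subtype.val).subst (fun n => Term.var (ρ n)) = s.rename Subtype.val := hfix2
    rw [hr1, hfix'] at h1
    rw [hr2, hfix2'] at h2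
    -- m(0,2,2) ≈ var 0
    have ha1 := hm₁.sbst (fun n => Term.var (τ n))
    rw [Term.rename_subst] at ha1
    have eb1 : m.subst ((fun n => Term.var (τ n)) ∘ ![0, 1, 1]) = m.rename ![0, 2, 2] :=
      Term.subst_congr (fun x => by fin_cases x <;> simp [hτ]) m
    rw [eb1] at ha1
    have ha1' : Eqv Γ (m.rename ![0, 2, 2]) (Term.var 0) := by
      have : ((Term.var (0:ℕ) : Term S ℕ).subst (fun n => Term.var (τ n))) = Term.var 0 := by simp [hτ, Term.subst]
      rwa [this] at ha1
    -- m(0,0,2) ≈ var 2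
    have ha2 := hm₂.sbst (fun n => Term.var (τ n))
    rw [Term.rename_subst] at ha2
    have eb2 : m.subst ((fun n => Term.var (τ n)) ∘ ![0, 0, 1]) = m.rename ![0, 0, 2] :=
      Term.subst_congr (fun x => by fin_cases x <;> simp [hτ]) m
    rw [eb2] at ha2
    have ha2' : Eqv Γ (m.rename ![0, 0, 2]) (Term.var 2) := by
      have : ((Term.var (1:ℕ) : Term S ℕ).subst (fun n => Term.var (τ n))) = Term.var 2 := by simp [hτ, Term.subst]
      rwa [this] at ha2
    -- var 0 ≈ var 2
    have hkey : Eqv Γ (Term.var (0:ℕ)) (Term.var 2) :=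
      ((h1.trans ha1').symm.trans h2).trans ha2'
    have hkey' := hkey.sbst (fun n => Term.var (if n = 2 then 1 else n))
    simp only [Term.subst] at hkey'
    norm_num at hkey'
    exact hcons hkey'

end UA
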